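/- Let X^ε be a set of s distinct empirical points. If O is an order ideal with #O = s that is stable with respect to X^ε, then for every admissible perturbation X̃ of X^ε the ideal I(X̃) admits an O-border basis, and the coefficient vector α_j ∈ ℝ^s of each border basis polynomial g_j = b_j − Σ_i α_{ij} t_i, viewed as a function of X̃, is continuous on the set of admissible perturbations. -/

import Mathlib

open MvPolynomial

/-- If `O = {t 1,...,t s}` (with `#O = s`) is stable w.r.t. the empirical
set `X^ε`, then for every admissible perturbation `q` the ideal `I(X̃)` admits an
`O`-border basis, and the coefficient vector `α b` of each border basis polynomial,
viewed as a function of the perturbed points, is continuous on the set of admissible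
perturbations. -/
theorem stmt16 (n s : ℕ) (p : Fin s → (Fin n → ℝ)) (ε : Fin n → ℝ) (hε : ∀ j, 0 < ε j)
    (t : Fin s → (Fin n →₀ ℕ)) (htinj : Function.Injective t)
    (hO : ∀ k, ∀ t' ≤ t k, ∃ l, t l = t')
    (B : Set (Fin n →₀ ℕ))
    (hB : ∀ b, b ∈ B ↔ ((∀ k, t k ≠ b) ∧ ∃ k, ∃ i : Fin n, b = t k + Finsupp.single i 1))
    (Adm : Set (Fin s → Fin n → ℝ))
    (hAdm : Adm = {q | ∀ k, ∑ j, ((q k j - p k j) / ε j) ^ 2 ≤ 1})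
    (hstable : ∀ q ∈ Adm, IsUnit (Matrix.of fun i j : Fin s =>
      MvPolynomial.eval (q i) (monomial (t j) (1 : ℝ))).det) :
    ∀ b ∈ B, ∃ α : (Fin s → Fin n → ℝ) → (Fin s → ℝ),
      (∀ q ∈ Adm,
        (monomial b (1 : ℝ) - ∑ k, C (α q k) * monomial (t k) 1)
          ∈ ⨅ i, RingHom.ker (MvPolynomial.eval (q i))) ∧
      ContinuousOn α Adm := by
  intro b hb
  classical
  set M : (Fin s → Fin n → ℝ) → Matrix (Fin s) (Fin s) ℝ :=
    fun q => Matrix.of fun i j : Fin s => MvPolynomial.eval (q i) (monomial (t j) (1 : ℝ))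
    with hM
  set v : (Fin s → Fin n → ℝ) → (Fin s → ℝ) :=
    fun q i => MvPolynomial.eval (q i) (monomial b (1 : ℝ)) with hv
  refine ⟨fun q => ((M q).det)⁻¹ • ((M q).adjugate.mulVec (v q)), ?_, ?_⟩
  · intro q hq
    have hdet : (M q).det ≠ 0 := by
      have := hstable q hq
      exact IsUnit.ne_zero this
    have key : (M q).mulVec (((M q).det)⁻¹ • ((M q).adjugate.mulVec (v q))) = v q := by
      rw [Matrix.mulVec_smul, Matrix.mulVec_mulVec, Matrix.mul_adjugate]
      ext i
      simp only [Matrix.smul_mulVec, Matrix.one_mulVec, Pi.smul_apply, smul_eq_mul]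
      rw [← mul_assoc, inv_mul_cancel₀ hdet, one_mul]
    simp only [Submodule.mem_iInf, RingHom.mem_ker]
    intro i
    have hi := congrFun key i
    simp only [Matrix.mulVec, dotProduct] at hi
    simp only [map_sub, map_sum, map_mul, eval_C]
    rw [show (MvPolynomial.eval (q i) (monomial b (1:ℝ))) = v q i from rfl]
    rw [← hi, sub_eq_zero]
    exact Finset.sum_congr rfl fun k _ => mul_comm _ _
  · have hMc : Continuous M := by
      apply continuous_matrix
      intro i j
      exact (MvPolynomial.continuous_eval _).comp (continuous_apply i)
    have hvc : Continuous v := by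
      apply continuous_pi
      intro i
      exact (MvPolynomial.continuous_eval _).comp (continuous_apply i)
    have hdetc : Continuous fun q => (M q).det := hMc.matrix_det
    have hadjc : Continuous fun q => (M q).adjugate.mulVec (v q) :=
      hMc.matrix_adjugate.matrix_mulVec hvc
    refine ContinuousOn.smul (f := fun q => (M q).det⁻¹) (g := fun q => (M q).adjugate.mulVec (v q)) ?_ ?_
    · exact (hdetc.continuousOn).inv₀ (fun q hq => (hstable q hq).ne_zero)
    · exact hadjc.continuousOn
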